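/- Let x, x' ∈ ℝ^d and suppose the ELLIPS score at x has a unique maximizing class i_*. Then score(x', i_*) − max_{i≠i_*} score(x', i) ≥ m(x) + λ_min·‖x'−x‖₂² − 2·c_M(x)·‖x'−x‖₂, where m(x) is the margin at x, c_M(x) = max_{i≠i_*} ‖Σ_{i_*}⁻¹(x−μ_{i_*}) − Σ_i⁻¹(x−μ_i)‖₂, and λ_min = min_{i≠i_*} λ_min(Σ_i⁻¹ − Σ_{i_*}⁻¹). -/

import Mathlib

open Matrix Real

/-- The Euclidean (ℓ₂) norm of a vector in `Fin d → ℝ`. -/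
noncomputable def l2norm {d : ℕ} (v : Fin d → ℝ) : ℝ :=
  Real.sqrt (v ⬝ᵥ v)

/-- The smallest eigenvalue of a symmetric matrix, given by the Rayleigh quotient
characterization: the infimum of `vᵀ M v` over unit vectors `v`. -/
noncomputable def minEig {d : ℕ} (M : Matrix (Fin d) (Fin d) ℝ) : ℝ :=
  ⨅ v : {v : Fin d → ℝ // v ⬝ᵥ v = 1}, (v : Fin d → ℝ) ⬝ᵥ (M *ᵥ (v : Fin d → ℝ))

/-- The ELLIPS score of class `i` at point `x`:
`score(x, i) = −(x−μᵢ)ᵀΣᵢ⁻¹(x−μᵢ) − log det Σᵢ + 2 log πᵢ`. -/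
noncomputable def score {d K : ℕ} (μ : Fin K → Fin d → ℝ)
    (S : Fin K → Matrix (Fin d) (Fin d) ℝ) (pri : Fin K → ℝ)
    (x : Fin d → ℝ) (i : Fin K) : ℝ :=
  -((x - μ i) ⬝ᵥ ((S i)⁻¹ *ᵥ (x - μ i))) - Real.log (S i).det + 2 * Real.log (pri i)

/- auxiliary lemmas -/

lemma dotProduct_self_nonneg' {d : ℕ} (v : Fin d → ℝ) : 0 ≤ v ⬝ᵥ v :=
  Finset.sum_nonneg fun i _ => mul_self_nonneg _

lemma l2norm_nonneg {d : ℕ} (v : Fin d → ℝ) : 0 ≤ l2norm v := Real.sqrt_nonneg _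

lemma l2norm_sq {d : ℕ} (v : Fin d → ℝ) : (l2norm v) ^ 2 = v ⬝ᵥ v :=
  Real.sq_sqrt (dotProduct_self_nonneg' v)

lemma abs_dot_le {d : ℕ} (v w : Fin d → ℝ) : |v ⬝ᵥ w| ≤ l2norm v * l2norm w := by
  have h1 : (v ⬝ᵥ w) ^ 2 ≤ (v ⬝ᵥ v) * (w ⬝ᵥ w) := by
    have h := Finset.sum_mul_sq_le_sq_mul_sq Finset.univ v w
    simpa [dotProduct, sq] using h
  calc |v ⬝ᵥ w| = Real.sqrt ((v ⬝ᵥ w) ^ 2) := (Real.sqrt_sq_eq_abs _).symm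
    _ ≤ Real.sqrt ((v ⬝ᵥ v) * (w ⬝ᵥ w)) := Real.sqrt_le_sqrt h1
    _ = l2norm v * l2norm w := Real.sqrt_mul (dotProduct_self_nonneg' v) _

lemma quad_expand {d : ℕ} (A : Matrix (Fin d) (Fin d) ℝ) (hA : Aᵀ = A) (a δ : Fin d → ℝ) :
    (a + δ) ⬝ᵥ (A *ᵥ (a + δ)) = a ⬝ᵥ (A *ᵥ a) + 2 * (δ ⬝ᵥ (A *ᵥ a)) + δ ⬝ᵥ (A *ᵥ δ) := by
  have hsymm : a ⬝ᵥ (A *ᵥ δ) = δ ⬝ᵥ (A *ᵥ a) := by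
    rw [dotProduct_mulVec]
    nth_rewrite 1 [← hA]
    rw [vecMul_transpose, dotProduct_comm]
  rw [mulVec_add, dotProduct_add, add_dotProduct, add_dotProduct, hsymm]
  ring

lemma rayleigh_bddBelow {d : ℕ} (M : Matrix (Fin d) (Fin d) ℝ) :
    BddBelow (Set.range fun v : {v : Fin d → ℝ // v ⬝ᵥ v = 1} =>
      (v : Fin d → ℝ) ⬝ᵥ (M *ᵥ (v : Fin d → ℝ))) := by
  refine ⟨-(∑ i, ∑ j, |M i j|), ?_⟩
  rintro _ ⟨⟨v, hv⟩, rfl⟩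
  have habs : ∀ k, |v k| ≤ 1 := by
    intro k
    have h1 : v k * v k ≤ ∑ j, v j * v j :=
      Finset.single_le_sum (f := fun j => v j * v j) (fun j _ => mul_self_nonneg _)
        (Finset.mem_univ k)
    have h2 : (∑ j, v j * v j) = 1 := hv
    nlinarith [abs_nonneg (v k), abs_mul_abs_self (v k)]
  simp only [dotProduct, mulVec, Finset.mul_sum]
  rw [← Finset.sum_neg_distrib]
  refine Finset.sum_le_sum fun i _ => ?_
  rw [← Finset.sum_neg_distrib]
  refine Finset.sum_le_sum fun j _ => ?_
  have h3 : |v i * (M i j * v j)| ≤ |M i j| := by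
    rw [abs_mul, abs_mul]
    have := mul_le_mul (habs i) (mul_le_mul_of_nonneg_left (habs j) (abs_nonneg (M i j)))
      (by positivity) one_pos.le
    linarith
  linarith [neg_abs_le (v i * (M i j * v j))]

lemma minEig_mul_le {d : ℕ} (M : Matrix (Fin d) (Fin d) ℝ) (δ : Fin d → ℝ) :
    minEig M * (l2norm δ) ^ 2 ≤ δ ⬝ᵥ (M *ᵥ δ) := by
  by_cases h0 : δ = 0
  · subst h0
    simp [l2norm]
  · have hc : 0 < δ ⬝ᵥ δ :=
      lt_of_le_of_ne (dotProduct_self_nonneg' δ)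
        (fun h => h0 (dotProduct_self_eq_zero.mp h.symm))
    set c := δ ⬝ᵥ δ with hcdef
    have hs : Real.sqrt c * Real.sqrt c = c := Real.mul_self_sqrt hc.le
    have hsne : Real.sqrt c ≠ 0 := ne_of_gt (Real.sqrt_pos.mpr hc)
    set u := (Real.sqrt c)⁻¹ • δ with hudef
    have hu : u ⬝ᵥ u = 1 := by
      rw [hudef, smul_dotProduct, dotProduct_smul, smul_eq_mul, smul_eq_mul, ← hcdef]
      field_simp
      rw [Real.sq_sqrt hc.le]
    have h1 : minEig M ≤ u ⬝ᵥ (M *ᵥ u) := ciInf_le (rayleigh_bddBelow M) ⟨u, hu⟩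
    have h4 : c * (u ⬝ᵥ (M *ᵥ u)) = δ ⬝ᵥ (M *ᵥ δ) := by
      rw [hudef, mulVec_smul, smul_dotProduct, dotProduct_smul, smul_eq_mul, smul_eq_mul]
      rw [← hs]
      field_simp
      rw [Real.sqrt_sq (Real.sqrt_nonneg _)]
    have h3 : (l2norm δ) ^ 2 = c := l2norm_sq δ
    calc minEig M * (l2norm δ) ^ 2 = minEig M * c := by rw [h3]
      _ ≤ (u ⬝ᵥ (M *ᵥ u)) * c := mul_le_mul_of_nonneg_right h1 hc.le
      _ = δ ⬝ᵥ (M *ᵥ δ) := by rw [mul_comm]; exact h4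

theorem stmt5 {d K : ℕ} (hd : 1 ≤ d) (hK : 2 ≤ K)
    (μ : Fin K → Fin d → ℝ) (S : Fin K → Matrix (Fin d) (Fin d) ℝ)
    (pri : Fin K → ℝ) (hpri : ∀ i, 0 < pri i) (hS : ∀ i, (S i).PosDef)
    (x x' : Fin d → ℝ) (istar : Fin K)
    (hmax : ∀ i, i ≠ istar → score μ S pri x i < score μ S pri x istar) :
    score μ S pri x' istar - (⨆ i : {i : Fin K // i ≠ istar}, score μ S pri x' i) ≥
      (score μ S pri x istar - ⨆ i : {i : Fin K // i ≠ istar}, score μ S pri x i)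
      + (⨅ i : {i : Fin K // i ≠ istar}, minEig ((S i)⁻¹ - (S istar)⁻¹))
          * (l2norm (x' - x)) ^ 2
      - 2 * (⨆ i : {i : Fin K // i ≠ istar},
          l2norm ((S istar)⁻¹ *ᵥ (x - μ istar) - (S i)⁻¹ *ᵥ (x - μ i)))
          * l2norm (x' - x) := by
  -- nonempty index type
  obtain ⟨j0, hj0⟩ := Fintype.exists_ne_of_one_lt_card (by rw [Fintype.card_fin]; omega) istar
  haveI : Nonempty {i : Fin K // i ≠ istar} := ⟨⟨j0, hj0⟩⟩
  -- symmetry of inverses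
  have hsymm : ∀ i, ((S i)⁻¹)ᵀ = (S i)⁻¹ := fun i => by
    have h := (hS i).1.inv
    rwa [Matrix.IsHermitian, conjTranspose_eq_transpose_of_trivial] at h
  set δ := x' - x with hδdef
  have hx'eq : ∀ j : Fin K, x' - μ j = (x - μ j) + δ := fun j => by
    funext t; simp [hδdef]
  set nδ := l2norm δ with hnδ
  have hnδ0 : 0 ≤ nδ := l2norm_nonneg δ
  -- per-class identity
  have hident : ∀ i : Fin K,
      score μ S pri x' istar - score μ S pri x' i =
      (score μ S pri x istar - score μ S pri x i)
      + δ ⬝ᵥ (((S i)⁻¹ - (S istar)⁻¹) *ᵥ δ)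
      - 2 * (δ ⬝ᵥ ((S istar)⁻¹ *ᵥ (x - μ istar) - (S i)⁻¹ *ᵥ (x - μ i))) := by
    intro i
    simp only [score, hx'eq]
    rw [quad_expand _ (hsymm istar), quad_expand _ (hsymm i), sub_mulVec,
      dotProduct_sub, dotProduct_sub]
    ring
  -- abbreviations for the three sup/inf quantities
  let supS := ⨆ i : {i : Fin K // i ≠ istar}, score μ S pri x i
  let infL := ⨅ i : {i : Fin K // i ≠ istar}, minEig ((S i)⁻¹ - (S istar)⁻¹)
  let supC := ⨆ i : {i : Fin K // i ≠ istar},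
      l2norm ((S istar)⁻¹ *ᵥ (x - μ istar) - (S i)⁻¹ *ᵥ (x - μ i))
  have key : ∀ i : {i : Fin K // i ≠ istar},
      score μ S pri x' i ≤ score μ S pri x' istar -
        ((score μ S pri x istar - supS) + infL * nδ ^ 2 - 2 * supC * nδ) := by
    intro i
    have hsc : score μ S pri x i ≤ supS :=
      le_ciSup (f := fun i : {i : Fin K // i ≠ istar} => score μ S pri x i)
        (Set.Finite.bddAbove (Set.finite_range _)) i
    have hL : infL ≤ minEig ((S i)⁻¹ - (S istar)⁻¹) :=
      ciInf_le (f := fun i : {i : Fin K // i ≠ istar} => minEig ((S i)⁻¹ - (S istar)⁻¹))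
        (Set.Finite.bddBelow (Set.finite_range _)) i
    have hR : minEig ((S i)⁻¹ - (S istar)⁻¹) * nδ ^ 2 ≤
        δ ⬝ᵥ (((S i)⁻¹ - (S istar)⁻¹) *ᵥ δ) := minEig_mul_le _ δ
    have hC : l2norm ((S istar)⁻¹ *ᵥ (x - μ istar) - (S i)⁻¹ *ᵥ (x - μ i)) ≤ supC :=
      le_ciSup (f := fun i : {i : Fin K // i ≠ istar} =>
          l2norm ((S istar)⁻¹ *ᵥ (x - μ istar) - (S i)⁻¹ *ᵥ (x - μ i)))
        (Set.Finite.bddAbove (Set.finite_range _)) i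
    have hcs : δ ⬝ᵥ ((S istar)⁻¹ *ᵥ (x - μ istar) - (S i)⁻¹ *ᵥ (x - μ i)) ≤ nδ *
        l2norm ((S istar)⁻¹ *ᵥ (x - μ istar) - (S i)⁻¹ *ᵥ (x - μ i)) :=
      le_trans (le_abs_self _) (abs_dot_le _ _)
    have hL2 : infL * nδ ^ 2 ≤ minEig ((S i)⁻¹ - (S istar)⁻¹) * nδ ^ 2 :=
      mul_le_mul_of_nonneg_right hL (sq_nonneg _)
    have hC2 : nδ * l2norm ((S istar)⁻¹ *ᵥ (x - μ istar) - (S i)⁻¹ *ᵥ (x - μ i)) ≤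
        nδ * supC := mul_le_mul_of_nonneg_left hC hnδ0
    have hid := hident i
    linarith
  have h1 : (⨆ i : {i : Fin K // i ≠ istar}, score μ S pri x' i) ≤
      score μ S pri x' istar -
        ((score μ S pri x istar - supS) + infL * nδ ^ 2 - 2 * supC * nδ) := ciSup_le key
  linarith
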